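/- Lurking isometry: Let X be a set, H₁, H₂ Hilbert spaces, and f : X → H₁, g : X → H₂ functions such that ⟨f(s), f(u)⟩ = ⟨g(s), g(u)⟩ for all s, u ∈ X. Then there exists a linear isometry V from the closed linear span of {f(s) : s ∈ X} in H₁ to H₂ such that V(f(s)) = g(s) for all s ∈ X. -/

import Mathlib

open Submodule

theorem lurking_isometry
    {X : Type*} {H₁ H₂ : Type*}
    [NormedAddCommGroup H₁] [InnerProductSpace ℂ H₁] [CompleteSpace H₁]
    [NormedAddCommGroup H₂] [InnerProductSpace ℂ H₂] [CompleteSpace H₂]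
    (f : X → H₁) (g : X → H₂)
    (h : ∀ s u : X, (inner ℂ (f s) (f u) : ℂ) = inner ℂ (g s) (g u)) :
    ∃ V : ((Submodule.span ℂ (Set.range f)).topologicalClosure : Submodule ℂ H₁) →ₗᵢ[ℂ] H₂,
      ∀ (s : X) (hs : f s ∈ (Submodule.span ℂ (Set.range f)).topologicalClosure),
        V ⟨f s, hs⟩ = g s := by
  classical
  set F : X → H₁ × H₂ := fun s => (f s, g s) with hF
  set K : Submodule ℂ (H₁ × H₂) := Submodule.span ℂ (Set.range F) with hK
  set K' : Submodule ℂ (H₁ × H₂) := K.topologicalClosure with hK'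
  set q : Submodule ℂ H₁ := (Submodule.span ℂ (Set.range f)).topologicalClosure with hq
  -- inner product relation on K
  have hinnK : ∀ z ∈ K, ∀ w ∈ K, (inner ℂ z.1 w.1 : ℂ) = inner ℂ z.2 w.2 := by
    intro z hz
    refine Submodule.span_induction ?_ ?_ ?_ ?_ hz
    · rintro _ ⟨s, rfl⟩ w hw
      refine Submodule.span_induction ?_ ?_ ?_ ?_ hw
      · rintro _ ⟨u, rfl⟩; exact h s u
      · simp
      · intro a b _ _ ha hb; simp [inner_add_right, ha, hb]
      · intro c a _ ha; simp [inner_smul_right, ha]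
    · simp
    · intro a b _ _ ha hb w hw; simp [inner_add_left, ha w hw, hb w hw]
    · intro c a _ ha w hw; simp [inner_smul_left, ha w hw]
  -- norm equality on K'
  have hnorm : ∀ z ∈ K', ‖z.1‖ = ‖z.2‖ := by
    have hcl : IsClosed {z : H₁ × H₂ | ‖z.1‖ = ‖z.2‖} :=
      isClosed_eq (continuous_norm.comp continuous_fst) (continuous_norm.comp continuous_snd)
    have hsub : (K : Set (H₁ × H₂)) ⊆ {z : H₁ × H₂ | ‖z.1‖ = ‖z.2‖} := by
      intro z hz
      have := hinnK z hz z hz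
      rw [inner_self_eq_norm_sq_to_K, inner_self_eq_norm_sq_to_K] at this
      have h2 : (‖z.1‖)^2 = (‖z.2‖)^2 := by exact_mod_cast this
      have : ‖z.1‖ = ‖z.2‖ := by
        rw [← Real.sqrt_sq (norm_nonneg z.1), ← Real.sqrt_sq (norm_nonneg z.2), h2]
      exact this
    intro z hz
    exact hcl.closure_subset_iff.mpr hsub (by rw [← Submodule.topologicalClosure_coe]; exact hz)
  -- the first-coordinate map on K'
  set fstL : (H₁ × H₂) →ₗ[ℂ] H₁ := LinearMap.fst ℂ H₁ H₂ with hfstL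
  set sndL : (H₁ × H₂) →ₗ[ℂ] H₂ := LinearMap.snd ℂ H₁ H₂ with hsndL
  set e : K' →ₗ[ℂ] H₁ := fstL.comp K'.subtype with he
  have henorm : ∀ z : K', ‖e z‖ = ‖z‖ := by
    intro z
    have h1 : ‖(z : H₁ × H₂).1‖ = ‖(z : H₁ × H₂).2‖ := hnorm _ z.2
    have : ‖(z : H₁ × H₂)‖ = max ‖(z : H₁ × H₂).1‖ ‖(z : H₁ × H₂).2‖ := rfl
    simp only [he, hfstL, LinearMap.comp_apply, LinearMap.fst_apply, Submodule.coe_subtype]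
    rw [show ‖z‖ = ‖(z : H₁ × H₂)‖ from rfl, this, ← h1, max_self]
  have hinj : Function.Injective e := by
    intro a b hab
    have : ‖e (a - b)‖ = 0 := by rw [map_sub, hab, sub_self, norm_zero]
    rw [henorm] at this
    exact sub_eq_zero.mp (norm_eq_zero.mp this)
  have hFmem : ∀ s : X, F s ∈ K' := fun s =>
    Submodule.le_topologicalClosure K (Submodule.subset_span ⟨s, rfl⟩)
  -- range e = q
  have hrange : LinearMap.range e = q := by
    apply le_antisymm
    · rintro _ ⟨z, rfl⟩
      have hcomap : K' ≤ Submodule.comap fstL q := by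
        apply Submodule.topologicalClosure_minimal
        · rw [hK, Submodule.span_le]
          rintro _ ⟨s, rfl⟩
          exact Submodule.le_topologicalClosure _ (Submodule.subset_span ⟨s, rfl⟩)
        · exact (Submodule.isClosed_topologicalClosure _).preimage continuous_fst
      exact hcomap z.2
    · apply Submodule.topologicalClosure_minimal
      · rw [Submodule.span_le]
        rintro _ ⟨s, rfl⟩
        exact ⟨⟨F s, hFmem s⟩, rfl⟩
      · have : CompleteSpace K' := (Submodule.isClosed_topologicalClosure _).completeSpace_coe
        have hre : (LinearMap.range e : Set H₁) = Set.range e := by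
          ext x; simp [LinearMap.mem_range, Set.mem_range]
        rw [hre]
        have := (LinearIsometry.isometry (⟨e, henorm⟩ : K' →ₗᵢ[ℂ] H₁)).isClosedEmbedding.isClosed_range
        simpa using this
  set equiv : K' ≃ₗ[ℂ] q :=
    (LinearEquiv.ofInjective e hinj).trans (LinearEquiv.ofEq _ _ hrange) with hequiv
  have hcoe : ∀ z : K', ((equiv z : q) : H₁) = e z := fun z => rfl
  refine ⟨⟨sndL.comp (K'.subtype.comp equiv.symm.toLinearMap), ?_⟩, ?_⟩
  · intro x
    have hez : e (equiv.symm x) = (x : H₁) := by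
      rw [← hcoe (equiv.symm x), LinearEquiv.apply_symm_apply]
    have h1 : ‖((equiv.symm x : K') : H₁ × H₂).1‖ = ‖((equiv.symm x : K') : H₁ × H₂).2‖ :=
      hnorm _ (equiv.symm x).2
    have h2 : ((equiv.symm x : K') : H₁ × H₂).1 = e (equiv.symm x) := rfl
    simp only [LinearMap.comp_apply, LinearEquiv.coe_toLinearMap, Submodule.coe_subtype,
      hsndL, LinearMap.snd_apply]
    rw [← h1, h2, hez]; rfl
  · intro s hs
    have hy : equiv ⟨F s, hFmem s⟩ = ⟨f s, hs⟩ := by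
      apply Subtype.ext
      rw [hcoe]
      rfl
    have hsymm : equiv.symm ⟨f s, hs⟩ = ⟨F s, hFmem s⟩ := by
      rw [← hy, LinearEquiv.symm_apply_apply]
    simp only [LinearIsometry.coe_mk, LinearMap.comp_apply, LinearEquiv.coe_toLinearMap,
      hsymm, Submodule.coe_subtype, LinearMap.snd_apply]
    rfl
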